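/- Let Q : ℝⁿ → ℝ be differentiable with Q(x) ≥ 0, let w, f be such that along a differentiable trajectory x(t) one has d/dt Q(x(t)) ≤ -α₀ Q(x(t)) + ⟨∇Q(x(t)), f(t)⟩, where ‖∇Q(x)‖ ≤ α₁ Q(x)^σ for 0 ≤ σ < 1, ‖f(t)‖ ≤ Δ_f, and α₀ > 0, α₁ > 0. Then limsup_{t→∞} Q(x(t)) ≤ (Δ_f α₁ / α₀)^{1/(1-σ)}. -/

import Mathlib

open Filter Real

/-- If a nonnegative differentiable function decreases at rate at least `δ` whenever it is
above `K` (for nonnegative times), then eventually it stays below `K`. -/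
lemma eventually_le_of_deriv_le_neg (g : ℝ → ℝ) (hg : Differentiable ℝ g)
    (hg0 : ∀ t, 0 ≤ g t) (K δ : ℝ) (hδ : 0 < δ)
    (hd : ∀ t, 0 ≤ t → K ≤ g t → deriv g t ≤ -δ) :
    ∀ᶠ t in atTop, g t ≤ K := by
  -- Step 1: there is some T ≥ 0 with g T ≤ K
  have hT : ∃ T, 0 ≤ T ∧ g T ≤ K := by
    by_contra h
    push_neg at h
    set N : ℝ := g 0 / δ + 1 with hN
    have hN0 : 0 < N := by have := hg0 0; positivity
    have hmono : AntitoneOn (fun t => g t + δ * t) (Set.Icc 0 N) := by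
      apply antitoneOn_of_deriv_nonpos (convex_Icc 0 N)
      · exact (hg.continuous.add (continuous_const.mul continuous_id)).continuousOn
      · exact fun t _ => ((hg t).add ((differentiableAt_id.const_mul δ))).differentiableWithinAt
      · intro t ht
        rw [interior_Icc] at ht
        have hder : HasDerivAt (fun t => g t + δ * t) (deriv g t + δ * 1) t :=
          (hg t).hasDerivAt.add ((hasDerivAt_id t).const_mul δ)
        rw [hder.deriv]
        have := hd t ht.1.le (h t ht.1.le).le
        linarith
    have h1 := hmono (Set.left_mem_Icc.mpr hN0.le) (Set.right_mem_Icc.mpr hN0.le) hN0.le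
    simp only at h1
    have hδN : δ * N = g 0 + δ := by
      have hδ0 : δ ≠ 0 := hδ.ne'
      rw [hN, mul_add, mul_one, mul_div_assoc', mul_comm δ (g 0), mul_div_assoc, div_self hδ0, mul_one]
    have := hg0 N
    nlinarith
  obtain ⟨T, hT0, hTK⟩ := hT
  -- Step 2: invariance, for all t ≥ T we have g t ≤ K
  filter_upwards [eventually_ge_atTop T] with t₁ ht₁
  by_contra hc
  push_neg at hc
  have ht₁T : T < t₁ := by
    rcases lt_or_eq_of_le ht₁ with h | h
    · exact h
    · exact absurd hTK (by rw [h]; exact not_le.mpr hc)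
  set S : Set ℝ := Set.Icc T t₁ ∩ g ⁻¹' Set.Iic K with hS
  have hSclosed : IsClosed S := isClosed_Icc.inter (isClosed_Iic.preimage hg.continuous)
  have hSne : S.Nonempty := ⟨T, ⟨le_refl T, ht₁⟩, hTK⟩
  have hSbdd : BddAbove S := ⟨t₁, fun s hs => hs.1.2⟩
  set s₀ : ℝ := sSup S with hs₀
  have hs₀mem : s₀ ∈ S := hSclosed.csSup_mem hSne hSbdd
  have hs₀K : g s₀ ≤ K := hs₀mem.2
  have hs₀lt : s₀ < t₁ := lt_of_le_of_ne hs₀mem.1.2 (fun h => by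
    rw [h] at hs₀K; exact absurd hs₀K (not_le.mpr hc))
  have hopen : ∀ s ∈ Set.Ioo s₀ t₁, K < g s := by
    intro s hs
    by_contra hsg
    push_neg at hsg
    have hsS : s ∈ S := ⟨⟨le_trans hs₀mem.1.1 hs.1.le, hs.2.le⟩, hsg⟩
    exact absurd (le_csSup hSbdd hsS) (not_le.mpr hs.1)
  have hmono : AntitoneOn g (Set.Icc s₀ t₁) := by
    apply antitoneOn_of_deriv_nonpos (convex_Icc s₀ t₁) hg.continuous.continuousOn
      (fun s _ => (hg s).differentiableWithinAt)
    intro s hs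
    rw [interior_Icc] at hs
    have hs0 : 0 ≤ s := le_trans (le_trans hT0 hs₀mem.1.1) hs.1.le
    have := hd s hs0 (hopen s hs).le
    linarith
  have := hmono (Set.left_mem_Icc.mpr hs₀lt.le) (Set.right_mem_Icc.mpr hs₀lt.le) hs₀lt.le
  linarith

theorem proposition1_optimum_estimate (n : ℕ)
    (Q : EuclideanSpace ℝ (Fin n) → ℝ) (x f : ℝ → EuclideanSpace ℝ (Fin n))
    (α₀ α₁ σ Δf : ℝ) (hα₀ : 0 < α₀) (hα₁ : 0 < α₁) (hσ0 : 0 ≤ σ) (hσ1 : σ < 1)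
    (hΔf : 0 ≤ Δf)
    (hQpos : ∀ y, 0 ≤ Q y)
    (hQdiff : Differentiable ℝ Q)
    (hxdiff : Differentiable ℝ x)
    (hgrad : ∀ y, ‖gradient Q y‖ ≤ α₁ * Q y ^ σ)
    (hf : ∀ t, ‖f t‖ ≤ Δf)
    (hderiv : ∀ t, 0 ≤ t →
      deriv (fun s => Q (x s)) t ≤ -α₀ * Q (x t) + (inner ℝ (gradient Q (x t)) (f t) : ℝ)) :
    Filter.limsup (fun t => Q (x t)) Filter.atTop ≤ (Δf * α₁ / α₀) ^ (1 / (1 - σ)) := by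
  set g : ℝ → ℝ := fun t => Q (x t) with hgdef
  have hgd : Differentiable ℝ g := hQdiff.comp hxdiff
  have hg0 : ∀ t, 0 ≤ g t := fun t => hQpos (x t)
  set c : ℝ := α₁ * Δf with hc
  have hc0 : 0 ≤ c := mul_nonneg hα₁.le hΔf
  set A : ℝ := Δf * α₁ / α₀ with hA
  have hA0 : 0 ≤ A := div_nonneg (mul_nonneg hΔf hα₁.le) hα₀.le
  have h1σ : (0:ℝ) < 1 - σ := by linarith
  set Δs : ℝ := A ^ (1 / (1 - σ)) with hΔs
  have hΔs0 : 0 ≤ Δs := Real.rpow_nonneg hA0 _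
  -- derivative bound
  have hbound : ∀ t, 0 ≤ t → deriv g t ≤ -α₀ * g t + c * g t ^ σ := by
    intro t ht
    have h1 := hderiv t ht
    have h2 : (inner ℝ (gradient Q (x t)) (f t) : ℝ) ≤ c * g t ^ σ := by
      calc (inner ℝ (gradient Q (x t)) (f t) : ℝ)
          ≤ ‖gradient Q (x t)‖ * ‖f t‖ := real_inner_le_norm _ _
        _ ≤ (α₁ * g t ^ σ) * Δf := by
            exact mul_le_mul (hgrad (x t)) (hf t) (norm_nonneg _)
              (mul_nonneg hα₁.le (Real.rpow_nonneg (hg0 t) _))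
        _ = c * g t ^ σ := by ring
    linarith
  -- for every ε > 0, limsup ≤ Δs + ε
  apply le_of_forall_pos_le_add
  intro ε hε
  set K : ℝ := Δs + ε with hK
  have hK0 : 0 < K := by rw [hK]; linarith
  have hK1σ : A < K ^ (1 - σ) := by
    have h1 : Δs ^ (1 - σ) = A := by
      rw [hΔs, ← Real.rpow_mul hA0, one_div_mul_cancel (ne_of_gt h1σ), Real.rpow_one]
    calc A = Δs ^ (1 - σ) := h1.symm
      _ < K ^ (1 - σ) := Real.rpow_lt_rpow hΔs0 (by linarith) h1σ
  set r : ℝ := c * K ^ (σ - 1) with hr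
  have hKpow : (0:ℝ) < K ^ (1 - σ) := Real.rpow_pos_of_pos hK0 _
  have hKneg : K ^ (σ - 1) = (K ^ (1 - σ))⁻¹ := by
    rw [show σ - 1 = -(1 - σ) by ring, Real.rpow_neg hK0.le]
  have hrα : r < α₀ := by
    rw [hr, hKneg, mul_inv_lt_iff₀ hKpow]
    calc c = α₀ * A := by rw [hc, hA]; field_simp
      _ < α₀ * K ^ (1 - σ) := by exact mul_lt_mul_of_pos_left hK1σ hα₀
  set δ : ℝ := (α₀ - r) * K with hδdef
  have hδ : 0 < δ := mul_pos (by linarith) hK0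
  have hd : ∀ t, 0 ≤ t → K ≤ g t → deriv g t ≤ -δ := by
    intro t ht hKg
    have hu0 : 0 < g t := lt_of_lt_of_le hK0 hKg
    have hus : g t ^ σ = g t ^ (σ - 1) * g t := by
      rw [← Real.rpow_add_one (ne_of_gt hu0)]
      ring_nf
    have hub : g t ^ (σ - 1) ≤ K ^ (σ - 1) := by
      rw [hKneg, show σ - 1 = -(1 - σ) by ring, Real.rpow_neg hu0.le]
      apply inv_anti₀ hKpow
      exact Real.rpow_le_rpow hK0.le hKg h1σ.le
    have h1 : c * g t ^ σ ≤ r * g t := by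
      rw [hus, hr]
      have : c * g t ^ (σ - 1) ≤ c * K ^ (σ - 1) :=
        mul_le_mul_of_nonneg_left hub hc0
      nlinarith
    have h2 := hbound t ht
    have h3 : -α₀ * g t + r * g t ≤ -δ := by
      rw [hδdef]
      nlinarith
    linarith
  have hev : ∀ᶠ t in atTop, g t ≤ K :=
    eventually_le_of_deriv_le_neg g hgd hg0 K δ hδ hd
  have hbb : Filter.IsBoundedUnder (· ≥ ·) atTop g :=
    ⟨0, Filter.eventually_map.2 (Filter.Eventually.of_forall fun t => hg0 t)⟩
  have hcb : Filter.IsCoboundedUnder (· ≤ ·) atTop g := hbb.isCoboundedUnder_le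
  calc Filter.limsup g atTop ≤ K := Filter.limsup_le_of_le hcb hev
    _ = Δs + ε := rfl
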